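/- Let W be a finite set of even cardinality N, let Σ be the set of perfect matchings of W, and let σ be uniformly distributed on Σ. Let F : Σ → ℝ be such that |F(m) − F(m')| ≤ κ for some κ > 0 whenever m, m' ∈ Σ differ by at most one switch, i.e. there is a set J ⊆ W with |J| ≤ 4 such that every pair of m not meeting J is also a pair of m'. Then for every t > 0, P( F(σ) − E F(σ) ≥ t ) ≤ exp( − t² / (N κ²) ). -/

import Mathlib

set_option linter.unusedSectionVars false
set_option linter.unusedVariables false
set_option maxHeartbeats 1000000

open Finset

section aux
variable {W : Type*} [Fintype W] [DecidableEq W]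

def IsMatchAux (S : Finset W) (f : W → W) : Prop :=
  (∀ x, f (f x) = x) ∧ (∀ x ∈ S, f x ≠ x ∧ f x ∈ S) ∧ (∀ x ∉ S, f x = x)

noncomputable def MMAux (S : Finset W) : Finset (W → W) :=
  @Finset.filter _ (IsMatchAux S) (Classical.decPred _) Finset.univ

lemma mem_MMAux {S : Finset W} {f : W → W} : f ∈ MMAux S ↔ IsMatchAux S f := by
  simp [MMAux, Finset.mem_filter]

def psiAux (w₀ x : W) (g : W → W) : W → W :=
  fun z => if z = w₀ then x else if z = x then w₀ else g z

def phiAux (w₀ x : W) (f : W → W) : W → W :=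
  fun z => if z = w₀ then w₀ else if z = x then x else f z

def chiAux (w₀ x y : W) (f : W → W) : W → W :=
  fun z => if z = w₀ then y else if z = y then w₀ else
    if z = x then f y else if z = f y then x else f z

lemma psi_w0 (w₀ x : W) (g : W → W) : psiAux w₀ x g w₀ = x := if_pos rfl

lemma psi_x (w₀ : W) {x : W} (hxw : x ≠ w₀) (g : W → W) : psiAux w₀ x g x = w₀ := by
  simp [psiAux, hxw]

lemma psi_other (w₀ x : W) (g : W → W) {z : W} (h1 : z ≠ w₀) (h2 : z ≠ x) :
    psiAux w₀ x g z = g z := by simp [psiAux, h1, h2]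

lemma phi_w0 (w₀ x : W) (f : W → W) : phiAux w₀ x f w₀ = w₀ := if_pos rfl

lemma phi_x (w₀ : W) {x : W} (hxw : x ≠ w₀) (f : W → W) : phiAux w₀ x f x = x := by
  simp [phiAux, hxw]

lemma phi_other (w₀ x : W) (f : W → W) {z : W} (h1 : z ≠ w₀) (h2 : z ≠ x) :
    phiAux w₀ x f z = f z := by simp [phiAux, h1, h2]

variable {S : Finset W} {w₀ x : W}

lemma psi_mem (hw : w₀ ∈ S) (hx : x ∈ S) (hxw : x ≠ w₀) {g : W → W}
    (hg : IsMatchAux ((S.erase w₀).erase x) g) : IsMatchAux S (psiAux w₀ x g) := by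
  obtain ⟨hg1, hg2, hg3⟩ := hg
  have hmem : ∀ z, z ∈ (S.erase w₀).erase x ↔ z ≠ x ∧ z ≠ w₀ ∧ z ∈ S := by
    intro z; simp [Finset.mem_erase, and_assoc]
  have hval : ∀ z, z ≠ w₀ → z ≠ x → z ∈ S →
      g z ≠ z ∧ g z ∈ S ∧ g z ≠ w₀ ∧ g z ≠ x := by
    intro z h1 h2 h3
    have hz' : z ∈ (S.erase w₀).erase x := (hmem z).2 ⟨h2, h1, h3⟩
    obtain ⟨a, b⟩ := hg2 z hz'
    have := (hmem _).1 b
    exact ⟨a, this.2.2, this.2.1, this.1⟩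
  have hfix : ∀ z, z ≠ w₀ → z ≠ x → z ∉ S → g z = z := by
    intro z h1 h2 h3
    exact hg3 z (fun hz => h3 ((hmem z).1 hz).2.2)
  refine ⟨?_, ?_, ?_⟩
  · intro z
    by_cases h1 : z = w₀
    · rw [h1]; rw [psi_w0, psi_x w₀ hxw]
    by_cases h2 : z = x
    · rw [h2]; rw [psi_x w₀ hxw, psi_w0]
    rw [psi_other w₀ x g h1 h2]
    by_cases h3 : z ∈ S
    · obtain ⟨a, b, c, d⟩ := hval z h1 h2 h3
      rw [psi_other w₀ x g c d, hg1]
    · rw [hfix z h1 h2 h3, psi_other w₀ x g h1 h2, hfix z h1 h2 h3]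
  · intro z hz
    by_cases h1 : z = w₀
    · rw [h1]; rw [psi_w0]; exact ⟨hxw, hx⟩
    by_cases h2 : z = x
    · rw [h2]; rw [psi_x w₀ hxw]; exact ⟨Ne.symm hxw, hw⟩
    · rw [psi_other w₀ x g h1 h2]
      obtain ⟨a, b, _, _⟩ := hval z h1 h2 hz
      exact ⟨a, b⟩
  · intro z hz
    have h1 : z ≠ w₀ := fun h => hz (h ▸ hw)
    have h2 : z ≠ x := fun h => hz (h ▸ hx)
    rw [psi_other w₀ x g h1 h2, hfix z h1 h2 hz]

lemma phi_mem (hw : w₀ ∈ S) (hx : x ∈ S) (hxw : x ≠ w₀) {f : W → W}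
    (hf : IsMatchAux S f) (hfw : f w₀ = x) : IsMatchAux ((S.erase w₀).erase x) (phiAux w₀ x f) := by
  obtain ⟨hf1, hf2, hf3⟩ := hf
  have hfx : f x = w₀ := by rw [← hfw, hf1]
  have hmem : ∀ z, z ∈ (S.erase w₀).erase x ↔ z ≠ x ∧ z ≠ w₀ ∧ z ∈ S := by
    intro z; simp [Finset.mem_erase, and_assoc]
  have hval : ∀ z, z ≠ w₀ → z ≠ x → z ∈ S →
      f z ≠ z ∧ f z ∈ S ∧ f z ≠ w₀ ∧ f z ≠ x := by
    intro z h1 h2 h3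
    obtain ⟨a, b⟩ := hf2 z h3
    refine ⟨a, b, fun h => h2 ?_, fun h => h1 ?_⟩
    · rw [← hfw, ← h, hf1]
    · rw [← hfx, ← h, hf1]
  refine ⟨?_, ?_, ?_⟩
  · intro z
    by_cases h1 : z = w₀
    · rw [h1]; rw [phi_w0, phi_w0]
    by_cases h2 : z = x
    · rw [h2]; rw [phi_x w₀ hxw, phi_x w₀ hxw]
    rw [phi_other w₀ x f h1 h2]
    by_cases h3 : z ∈ S
    · obtain ⟨a, b, c, d⟩ := hval z h1 h2 h3
      rw [phi_other w₀ x f c d, hf1]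
    · rw [hf3 z h3, phi_other w₀ x f h1 h2, hf3 z h3]
  · intro z hz
    obtain ⟨h2, h1, h3⟩ := (hmem z).1 hz
    rw [phi_other w₀ x f h1 h2]
    obtain ⟨a, b, c, d⟩ := hval z h1 h2 h3
    exact ⟨a, (hmem _).2 ⟨d, c, b⟩⟩
  · intro z hz
    by_cases h1 : z = w₀
    · rw [h1]; exact phi_w0 w₀ x f
    by_cases h2 : z = x
    · rw [h2]; exact phi_x w₀ hxw f
    rw [phi_other w₀ x f h1 h2]
    refine hf3 z (fun h3 => hz ((hmem z).2 ⟨h2, h1, h3⟩))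

lemma phi_psi (hxw : x ≠ w₀) {g : W → W}
    (hgw : g w₀ = w₀) (hgx : g x = x) : phiAux w₀ x (psiAux w₀ x g) = g := by
  funext z
  by_cases h1 : z = w₀
  · rw [h1]; rw [phi_w0, hgw]
  by_cases h2 : z = x
  · rw [h2]; rw [phi_x w₀ hxw, hgx]
  rw [phi_other w₀ x _ h1 h2, psi_other w₀ x g h1 h2]

lemma psi_phi (hxw : x ≠ w₀) {f : W → W}
    (hfw : f w₀ = x) (hfx : f x = w₀) : psiAux w₀ x (phiAux w₀ x f) = f := by
  funext z
  by_cases h1 : z = w₀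
  · rw [h1]; rw [psi_w0, hfw]
  by_cases h2 : z = x
  · rw [h2]; rw [psi_x w₀ hxw, hfx]
  rw [psi_other w₀ x _ h1 h2, phi_other w₀ x f h1 h2]



lemma chi_w0 (w₀ x y : W) (f : W → W) : chiAux w₀ x y f w₀ = y := if_pos rfl

lemma chi_y (w₀ x : W) {y : W} (hyw : y ≠ w₀) (f : W → W) : chiAux w₀ x y f y = w₀ := by
  simp [chiAux, hyw]

lemma chi_x (w₀ : W) {x y : W} (hxw : x ≠ w₀) (hxy : x ≠ y) (f : W → W) :
    chiAux w₀ x y f x = f y := by simp [chiAux, hxw, hxy]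

lemma chi_u (w₀ x y : W) {f : W → W} (h1 : f y ≠ w₀) (h2 : f y ≠ y) (h3 : f y ≠ x) :
    chiAux w₀ x y f (f y) = x := by simp [chiAux, h1, h2, h3]

lemma chi_other (w₀ x y : W) (f : W → W) {z : W} (h1 : z ≠ w₀) (h2 : z ≠ y) (h3 : z ≠ x)
    (h4 : z ≠ f y) : chiAux w₀ x y f z = f z := by simp [chiAux, h1, h2, h3, h4]

lemma chi_spec {S : Finset W} {w₀ x y : W} (hw : w₀ ∈ S) (hx : x ∈ S) (hy : y ∈ S)
    (hxw : x ≠ w₀) (hyw : y ≠ w₀) (hxy : x ≠ y) {f : W → W}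
    (hf : IsMatchAux S f) (hfw : f w₀ = x) :
    IsMatchAux S (chiAux w₀ x y f) ∧ chiAux w₀ x y f w₀ = y ∧
      chiAux w₀ y x (chiAux w₀ x y f) = f := by
  obtain ⟨hf1, hf2, hf3⟩ := hf
  have hfx : f x = w₀ := by rw [← hfw, hf1]
  have huS : f y ∈ S := (hf2 y hy).2
  have hu2 : f y ≠ y := (hf2 y hy).1
  have hu3 : f y ≠ w₀ := fun h => hxy.symm (by rw [← hfw, ← h, hf1])
  have hu4 : f y ≠ x := fun h => hyw (by rw [← hfx, ← h, hf1])
  -- facts about generic z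
  have hgen : ∀ z, z ≠ w₀ → z ≠ y → z ≠ x → z ≠ f y → z ∈ S →
      f z ≠ w₀ ∧ f z ≠ y ∧ f z ≠ x ∧ f z ≠ f y ∧ f z ∈ S ∧ f z ≠ z := by
    intro z h1 h2 h3 h4 h5
    refine ⟨fun h => h3 (by rw [← hfw, ← h, hf1]), fun h => h4 (by rw [← h, hf1]),
      fun h => h1 (by rw [← hfx, ← h, hf1]), fun h => h2 ?_, (hf2 z h5).2, (hf2 z h5).1⟩
    · have := congrArg f h
      rwa [hf1, hf1] at this
  set g := chiAux w₀ x y f with hg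
  have hgw : g w₀ = y := chi_w0 w₀ x y f
  have hgy : g y = w₀ := chi_y w₀ x hyw f
  have hgx : g x = f y := chi_x w₀ hxw hxy f
  have hgu : g (f y) = x := chi_u w₀ x y hu3 hu2 hu4
  have hmatch : IsMatchAux S g := by
    refine ⟨?_, ?_, ?_⟩
    · intro z
      by_cases h1 : z = w₀
      · rw [h1, hgw, hgy]
      by_cases h2 : z = y
      · rw [h2, hgy, hgw]
      by_cases h3 : z = x
      · rw [h3, hgx, hgu]
      by_cases h4 : z = f y
      · rw [h4, hgu, hgx]
      rw [hg, chi_other w₀ x y f h1 h2 h3 h4]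
      by_cases h5 : z ∈ S
      · obtain ⟨a, b, c, d, _, _⟩ := hgen z h1 h2 h3 h4 h5
        rw [chi_other w₀ x y f a b c d, hf1]
      · rw [hf3 z h5, chi_other w₀ x y f h1 h2 h3 h4, hf3 z h5]
    · intro z hz
      by_cases h1 : z = w₀
      · rw [h1, hgw]; exact ⟨hyw, hy⟩
      by_cases h2 : z = y
      · rw [h2, hgy]; exact ⟨Ne.symm hyw, hw⟩
      by_cases h3 : z = x
      · rw [h3, hgx]; exact ⟨hu4, huS⟩
      by_cases h4 : z = f y
      · rw [h4, hgu]; exact ⟨Ne.symm hu4, hx⟩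
      rw [hg, chi_other w₀ x y f h1 h2 h3 h4]
      obtain ⟨_, _, _, _, e, ne⟩ := hgen z h1 h2 h3 h4 hz
      exact ⟨ne, e⟩
    · intro z hz
      have h1 : z ≠ w₀ := fun h => hz (h ▸ hw)
      have h2 : z ≠ y := fun h => hz (h ▸ hy)
      have h3 : z ≠ x := fun h => hz (h ▸ hx)
      have h4 : z ≠ f y := fun h => hz (h ▸ huS)
      rw [hg, chi_other w₀ x y f h1 h2 h3 h4, hf3 z hz]
  refine ⟨hmatch, hgw, ?_⟩
  -- inverse: chiAux w₀ y x g = f, where g x = f y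
  funext z
  have hgxv : g x = f y := hgx
  by_cases h1 : z = w₀
  · rw [h1, chi_w0, hfw]
  by_cases h2 : z = x
  · rw [h2, chi_y w₀ y hxw g, hfx]
  by_cases h3 : z = y
  · rw [h3, chi_x w₀ hyw hxy.symm g, hgxv]
  by_cases h4 : z = f y
  · have e1 : chiAux w₀ y x g (g x) = y := chi_u w₀ y x (f := g)
      (by rw [hgxv]; exact hu3) (by rw [hgxv]; exact hu4) (by rw [hgxv]; exact hu2)
    calc chiAux w₀ y x g z = chiAux w₀ y x g (g x) := by rw [h4, hgxv]
      _ = y := e1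
      _ = f z := by rw [h4, hf1]
  · rw [chi_other w₀ y x g h1 h2 h3 (by rw [hgxv]; exact h4), hg,
      chi_other w₀ x y f h1 h3 h2 h4]


end aux

lemma chordAux {c u v : ℝ} (hc : 0 < c) (hv : |v| ≤ c) :
    Real.exp (u * v) ≤ Real.cosh (u * c) + (v / c) * Real.sinh (u * c) := by
  have hab : (c - v) / (2 * c) + (c + v) / (2 * c) = 1 := by field_simp; ring
  have hv1 : -c ≤ v := (abs_le.1 hv).1
  have hv2 : v ≤ c := (abs_le.1 hv).2
  have ha : 0 ≤ (c - v) / (2 * c) := by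
    apply div_nonneg (by linarith) (by positivity)
  have hb : 0 ≤ (c + v) / (2 * c) := by
    apply div_nonneg (by linarith) (by positivity)
  have key := convexOn_exp.2 (Set.mem_univ (u * (-c))) (Set.mem_univ (u * c)) ha hb hab
  simp only [smul_eq_mul] at key
  have harg : (c - v) / (2 * c) * (u * -c) + (c + v) / (2 * c) * (u * c) = u * v := by
    field_simp
    ring
  rw [harg] at key
  refine key.trans (le_of_eq ?_)
  rw [Real.cosh_eq, Real.sinh_eq]
  have : u * -c = -(u * c) := by ring
  rw [this]
  field_simp
  ring

lemma hoeffAux {ι : Type*} (s : Finset ι) (p v : ι → ℝ) (u c : ℝ) (hc : 0 < c)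
    (hp : ∀ i ∈ s, 0 ≤ p i) (hp1 : ∑ i ∈ s, p i = 1)
    (hv : ∀ i ∈ s, p i ≠ 0 → |v i| ≤ c) (hmean : ∑ i ∈ s, p i * v i = 0) :
    ∑ i ∈ s, p i * Real.exp (u * v i) ≤ Real.exp (u ^ 2 * c ^ 2 / 2) := by
  have step1 : ∑ i ∈ s, p i * Real.exp (u * v i) ≤
      ∑ i ∈ s, p i * (Real.cosh (u * c) + (v i / c) * Real.sinh (u * c)) := by
    refine Finset.sum_le_sum fun i hi => ?_
    by_cases hpi : p i = 0
    · simp [hpi]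
    · exact mul_le_mul_of_nonneg_left (chordAux hc (hv i hi hpi)) (hp i hi)
  have step2 : ∑ i ∈ s, p i * (Real.cosh (u * c) + (v i / c) * Real.sinh (u * c)) =
      Real.cosh (u * c) := by
    have : ∀ i ∈ s, p i * (Real.cosh (u * c) + (v i / c) * Real.sinh (u * c)) =
        p i * Real.cosh (u * c) + (p i * v i) * (Real.sinh (u * c) / c) := by
      intro i _; field_simp
    rw [Finset.sum_congr rfl this, Finset.sum_add_distrib, ← Finset.sum_mul, ← Finset.sum_mul,
      hp1, hmean, one_mul, zero_mul, add_zero]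
  have step3 : Real.cosh (u * c) ≤ Real.exp (u ^ 2 * c ^ 2 / 2) := by
    have := Real.cosh_le_exp_half_sq (u * c)
    rwa [mul_pow] at this
  exact step1.trans (step2.le.trans step3)

section key
open Finset
variable {W : Type*} [Fintype W] [DecidableEq W]

lemma fiber_sum {S : Finset W} {w₀ x : W} (hw : w₀ ∈ S) (hx : x ∈ S) (hxw : x ≠ w₀)
    (T : (W → W) → ℝ) :
    ∑ f ∈ (MMAux S).filter (fun f => f w₀ = x), T f =
      ∑ g ∈ MMAux ((S.erase w₀).erase x), T (psiAux w₀ x g) := by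
  refine Finset.sum_nbij' (phiAux w₀ x) (psiAux w₀ x) ?_ ?_ ?_ ?_ ?_
  · intro f hf
    obtain ⟨hf1, hf2⟩ := Finset.mem_filter.1 hf
    exact mem_MMAux.2 (phi_mem hw hx hxw (mem_MMAux.1 hf1) hf2)
  · intro g hg
    refine Finset.mem_filter.2 ⟨mem_MMAux.2 (psi_mem hw hx hxw (mem_MMAux.1 hg)), psi_w0 w₀ x g⟩
  · intro f hf
    obtain ⟨hf1, hf2⟩ := Finset.mem_filter.1 hf
    have hfx : f x = w₀ := by rw [← hf2, (mem_MMAux.1 hf1).1]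
    exact psi_phi hxw hf2 hfx
  · intro g hg
    have hg' := mem_MMAux.1 hg
    have hgw : g w₀ = w₀ := hg'.2.2 w₀ (by simp [Finset.mem_erase, hxw])
    have hgx : g x = x := hg'.2.2 x (by simp [Finset.mem_erase])
    exact phi_psi hxw hgw hgx
  · intro f hf
    obtain ⟨hf1, hf2⟩ := Finset.mem_filter.1 hf
    have hfx : f x = w₀ := by rw [← hf2, (mem_MMAux.1 hf1).1]
    rw [psi_phi hxw hf2 hfx]

lemma fiber_card {S : Finset W} {w₀ x : W} (hw : w₀ ∈ S) (hx : x ∈ S) (hxw : x ≠ w₀) :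
    ((MMAux S).filter (fun f => f w₀ = x)).card = (MMAux ((S.erase w₀).erase x)).card := by
  have h := fiber_sum (W := W) hw hx hxw (fun _ => (1 : ℝ))
  simpa using h

end key

section key2
open Finset
variable {W : Type*} [Fintype W] [DecidableEq W]

lemma couple_sum {S : Finset W} {w₀ x y : W} (hw : w₀ ∈ S) (hx : x ∈ S) (hy : y ∈ S)
    (hxw : x ≠ w₀) (hyw : y ≠ w₀) (hxy : x ≠ y) (T : (W → W) → ℝ) :
    ∑ g ∈ (MMAux S).filter (fun f => f w₀ = y), T g =
      ∑ f ∈ (MMAux S).filter (fun f => f w₀ = x), T (chiAux w₀ x y f) := by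
  refine Finset.sum_nbij' (chiAux w₀ y x) (chiAux w₀ x y) ?_ ?_ ?_ ?_ ?_
  · intro g hg
    obtain ⟨hg1, hg2⟩ := Finset.mem_filter.1 hg
    obtain ⟨a, b, _⟩ := chi_spec hw hy hx hyw hxw (Ne.symm hxy) (mem_MMAux.1 hg1) hg2
    exact Finset.mem_filter.2 ⟨mem_MMAux.2 a, b⟩
  · intro f hf
    obtain ⟨hf1, hf2⟩ := Finset.mem_filter.1 hf
    obtain ⟨a, b, _⟩ := chi_spec hw hx hy hxw hyw hxy (mem_MMAux.1 hf1) hf2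
    exact Finset.mem_filter.2 ⟨mem_MMAux.2 a, b⟩
  · intro g hg
    obtain ⟨hg1, hg2⟩ := Finset.mem_filter.1 hg
    exact (chi_spec hw hy hx hyw hxw (Ne.symm hxy) (mem_MMAux.1 hg1) hg2).2.2
  · intro f hf
    obtain ⟨hf1, hf2⟩ := Finset.mem_filter.1 hf
    exact (chi_spec hw hx hy hxw hyw hxy (mem_MMAux.1 hf1) hf2).2.2
  · intro g hg
    obtain ⟨hg1, hg2⟩ := Finset.mem_filter.1 hg
    rw [(chi_spec hw hy hx hyw hxw (Ne.symm hxy) (mem_MMAux.1 hg1) hg2).2.2]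

lemma couple_card {S : Finset W} {w₀ x y : W} (hw : w₀ ∈ S) (hx : x ∈ S) (hy : y ∈ S)
    (hxw : x ≠ w₀) (hyw : y ≠ w₀) (hxy : x ≠ y) :
    ((MMAux S).filter (fun f => f w₀ = y)).card =
      ((MMAux S).filter (fun f => f w₀ = x)).card := by
  simpa using couple_sum (W := W) hw hx hy hxw hyw hxy (fun _ => (1 : ℝ))

end key2

section key3
open Finset
variable {W : Type*} [Fintype W] [DecidableEq W]

lemma keyAux (κ u : ℝ) (hκ : 0 < κ) :
    ∀ (n : ℕ) (S : Finset W), S.card = n → ∀ G : (W → W) → ℝ,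
    (∀ f ∈ MMAux S, ∀ g ∈ MMAux S,
        (∃ J : Finset W, J.card ≤ 4 ∧ ∀ z ∉ J, f z = g z) → |G f - G g| ≤ κ) →
    ∑ f ∈ MMAux S, Real.exp (u * (G f - (∑ g ∈ MMAux S, G g) / ((MMAux S).card : ℝ))) ≤
      ((MMAux S).card : ℝ) * Real.exp (u ^ 2 * (S.card : ℝ) * κ ^ 2 / 4) := by
  intro n
  induction n using Nat.strong_induction_on with
  | _ n IH =>
  intro S hS G hG
  by_cases hem : MMAux S = ∅
  · simp [hem]
  obtain ⟨f₀, hf₀⟩ := Finset.nonempty_iff_ne_empty.2 hem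
  have hf₀' := mem_MMAux.1 hf₀
  by_cases hSem : S = ∅
  · subst hSem
    have hMM : MMAux (∅ : Finset W) = {fun z => z} := by
      ext f
      rw [mem_MMAux, Finset.mem_singleton]
      constructor
      · intro h; funext z; exact h.2.2 z (Finset.notMem_empty z)
      · rintro rfl
        exact ⟨fun z => rfl, fun z hz => absurd hz (Finset.notMem_empty z), fun z _ => rfl⟩
    rw [hMM, Finset.sum_singleton, Finset.sum_singleton, Finset.card_singleton]
    norm_num
  obtain ⟨w₀, hw₀⟩ := Finset.nonempty_iff_ne_empty.2 hSem
  have hx₀ : f₀ w₀ ∈ S ∧ f₀ w₀ ≠ w₀ := ⟨(hf₀'.2.1 w₀ hw₀).2, (hf₀'.2.1 w₀ hw₀).1⟩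
  have hcard2 : 2 ≤ S.card := Finset.one_lt_card.2 ⟨w₀, hw₀, f₀ w₀, hx₀.1, (hx₀.2).symm⟩
  have hn : n = S.card := hS.symm
  -- notation
  set n1 : ℝ := ((MMAux S).card : ℝ) with hn1
  have hn1pos : 0 < n1 := by
    have h := Finset.card_pos.2 ⟨f₀, hf₀⟩
    rw [hn1]
    exact_mod_cast h
  set μ : ℝ := (∑ g ∈ MMAux S, G g) / n1 with hμ
  set Fib : W → Finset (W → W) := fun x => (MMAux S).filter (fun f => f w₀ = x) with hFib
  set m : W → ℝ := fun x => ((Fib x).card : ℝ) with hm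
  set μf : W → ℝ := fun x => (∑ f ∈ Fib x, G f) / m x with hμf
  set p : W → ℝ := fun x => m x / n1 with hp
  -- (A) fiberwise decomposition
  have hmaps : ∀ f ∈ MMAux S, f w₀ ∈ S.erase w₀ := by
    intro f hf
    have hf' := mem_MMAux.1 hf
    exact Finset.mem_erase.2 ⟨(hf'.2.1 w₀ hw₀).1, (hf'.2.1 w₀ hw₀).2⟩
  have hA : ∀ T : (W → W) → ℝ,
      ∑ x ∈ S.erase w₀, ∑ f ∈ Fib x, T f = ∑ f ∈ MMAux S, T f := by
    intro T
    exact Finset.sum_fiberwise_of_maps_to hmaps T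
  -- (E) total mass
  have hE : ∑ x ∈ S.erase w₀, m x = n1 := by
    have h := hA (fun _ => (1 : ℝ))
    simp only [Finset.sum_const, nsmul_eq_mul, mul_one] at h
    simp only [hm, hn1]
    exact_mod_cast h
  -- (F) weighted fiber means
  have hmul : ∀ x, m x * μf x = ∑ f ∈ Fib x, G f := by
    intro x
    simp only [hμf, hm]
    by_cases h : Fib x = ∅
    · simp [h]
    · have hc : ((Fib x).card : ℝ) ≠ 0 := by
        have := Finset.card_pos.2 (Finset.nonempty_iff_ne_empty.2 h)
        positivity
      field_simp
  have hF : ∑ x ∈ S.erase w₀, m x * μf x = n1 * μ := by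
    rw [Finset.sum_congr rfl (fun x _ => hmul x), hA, hμ]
    field_simp
  -- (B) conditional estimate on each fiber
  have hB : ∀ x ∈ S.erase w₀,
      ∑ f ∈ Fib x, Real.exp (u * (G f - μf x)) ≤
        m x * Real.exp (u ^ 2 * ((S.card : ℝ) - 2) * κ ^ 2 / 4) := by
    intro x hx
    obtain ⟨hxw, hxS⟩ := Finset.mem_erase.1 hx
    have hS'card : ((S.erase w₀).erase x).card = S.card - 2 := by
      rw [Finset.card_erase_of_mem (Finset.mem_erase.2 ⟨hxw, hxS⟩),
        Finset.card_erase_of_mem hw₀]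
      omega
    have hlt : S.card - 2 < n := by omega
    have hlip : ∀ g ∈ MMAux ((S.erase w₀).erase x), ∀ h ∈ MMAux ((S.erase w₀).erase x),
        (∃ J : Finset W, J.card ≤ 4 ∧ ∀ z ∉ J, g z = h z) →
        |G (psiAux w₀ x g) - G (psiAux w₀ x h)| ≤ κ := by
      intro g hg h hh ⟨J, hJ, hag⟩
      refine hG _ (mem_MMAux.2 (psi_mem hw₀ hxS hxw (mem_MMAux.1 hg)))
        _ (mem_MMAux.2 (psi_mem hw₀ hxS hxw (mem_MMAux.1 hh))) ⟨J, hJ, ?_⟩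
      intro z hz
      by_cases h1 : z = w₀
      · rw [h1, psi_w0, psi_w0]
      by_cases h2 : z = x
      · rw [h2, psi_x w₀ hxw, psi_x w₀ hxw]
      rw [psi_other w₀ x g h1 h2, psi_other w₀ x h h1 h2, hag z hz]
    have IHx := IH (S.card - 2) hlt ((S.erase w₀).erase x) hS'card
      (fun g => G (psiAux w₀ x g)) hlip
    have hceq : (Fib x).card = (MMAux ((S.erase w₀).erase x)).card :=
      fiber_card hw₀ hxS hxw
    have hseq : ∑ f ∈ Fib x, G f = ∑ g ∈ MMAux ((S.erase w₀).erase x), G (psiAux w₀ x g) :=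
      fiber_sum hw₀ hxS hxw G
    have hs2 : ∑ f ∈ Fib x, Real.exp (u * (G f - μf x)) =
        ∑ g ∈ MMAux ((S.erase w₀).erase x), Real.exp (u * (G (psiAux w₀ x g) - μf x)) :=
      fiber_sum hw₀ hxS hxw (fun f => Real.exp (u * (G f - μf x)))
    have hμfx : μf x = (∑ g ∈ MMAux ((S.erase w₀).erase x), G (psiAux w₀ x g)) /
        ((MMAux ((S.erase w₀).erase x)).card : ℝ) := by
      simp only [hμf, hm]
      rw [hseq, hceq]
    have hcast : ((((S.erase w₀).erase x).card : ℕ) : ℝ) = (S.card : ℝ) - 2 := by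
      rw [hS'card, Nat.cast_sub hcard2]
      norm_num
    rw [hs2, hμfx]
    have hmeq : m x = ((MMAux ((S.erase w₀).erase x)).card : ℝ) := by
      simp only [hm]; rw [hceq]
    rw [hmeq]
    calc ∑ g ∈ MMAux ((S.erase w₀).erase x),
          Real.exp (u * (G (psiAux w₀ x g) -
            (∑ g ∈ MMAux ((S.erase w₀).erase x), G (psiAux w₀ x g)) /
              ((MMAux ((S.erase w₀).erase x)).card : ℝ)))
        ≤ ((MMAux ((S.erase w₀).erase x)).card : ℝ) *
            Real.exp (u ^ 2 * ((((S.erase w₀).erase x).card : ℕ) : ℝ) * κ ^ 2 / 4) := IHx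
      _ = ((MMAux ((S.erase w₀).erase x)).card : ℝ) *
            Real.exp (u ^ 2 * ((S.card : ℝ) - 2) * κ ^ 2 / 4) := by rw [hcast]
  -- (D) fiber means are κ-close
  have hD : ∀ x ∈ S.erase w₀, ∀ y ∈ S.erase w₀, (Fib x).Nonempty →
      |μf x - μf y| ≤ κ := by
    intro x hx y hy hne
    by_cases hxy : x = y
    · rw [hxy]; simpa using hκ.le
    obtain ⟨hxw, hxS⟩ := Finset.mem_erase.1 hx
    obtain ⟨hyw, hyS⟩ := Finset.mem_erase.1 hy
    have hcards : (Fib y).card = (Fib x).card := couple_card hw₀ hxS hyS hxw hyw hxy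
    have hsum : ∑ g ∈ Fib y, G g = ∑ f ∈ Fib x, G (chiAux w₀ x y f) :=
      couple_sum hw₀ hxS hyS hxw hyw hxy G
    have hmx : (0 : ℝ) < m x := by
      simp only [hm]; exact_mod_cast Finset.card_pos.2 hne
    have hperf : ∀ f ∈ Fib x, |G f - G (chiAux w₀ x y f)| ≤ κ := by
      intro f hf
      obtain ⟨hf1, hf2⟩ := Finset.mem_filter.1 hf
      have hfm := mem_MMAux.1 hf1
      obtain ⟨ha, hb, _⟩ := chi_spec hw₀ hxS hyS hxw hyw hxy hfm hf2
      refine hG f hf1 _ (mem_MMAux.2 ha) ⟨insert w₀ (insert x (insert y {f y})), ?_, ?_⟩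
      · have h1 := Finset.card_insert_le w₀ (insert x (insert y {f y}))
        have h2 := Finset.card_insert_le x (insert y {f y})
        have h3 := Finset.card_insert_le y ({f y} : Finset W)
        have h4 : ({f y} : Finset W).card = 1 := Finset.card_singleton _
        omega
      · intro z hz
        simp only [Finset.mem_insert, Finset.mem_singleton, not_or] at hz
        exact (chi_other w₀ x y f hz.1 hz.2.2.1 hz.2.1 hz.2.2.2).symm
    have heq : μf x - μf y = (∑ f ∈ Fib x, (G f - G (chiAux w₀ x y f))) / m x := by
      simp only [hμf, hm]
      rw [hcards, hsum, div_sub_div_same, Finset.sum_sub_distrib]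
    rw [heq, abs_div, abs_of_pos hmx, div_le_iff₀ hmx]
    calc |∑ f ∈ Fib x, (G f - G (chiAux w₀ x y f))|
        ≤ ∑ f ∈ Fib x, |G f - G (chiAux w₀ x y f)| := Finset.abs_sum_le_sum_abs _ _
      _ ≤ ∑ f ∈ Fib x, κ := Finset.sum_le_sum hperf
      _ = m x * κ := by simp [Finset.sum_const, hm, nsmul_eq_mul]
      _ = κ * m x := by ring
  -- (G) weights
  have hpsum : ∑ x ∈ S.erase w₀, p x = 1 := by
    simp only [hp]
    rw [← Finset.sum_div, hE, div_self hn1pos.ne']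
  have hpnn : ∀ x ∈ S.erase w₀, 0 ≤ p x := by
    intro x _
    have h1 : 0 ≤ m x := Nat.cast_nonneg _
    exact div_nonneg h1 hn1pos.le
  have hμsum : ∑ x ∈ S.erase w₀, p x * μf x = μ := by
    have : ∀ x, p x * μf x = (m x * μf x) / n1 := by
      intro x; simp only [hp]; ring
    rw [Finset.sum_congr rfl (fun x _ => this x), ← Finset.sum_div, hF]
    field_simp
  have hmean0 : ∑ x ∈ S.erase w₀, p x * (μf x - μ) = 0 := by
    have : ∀ x ∈ S.erase w₀, p x * (μf x - μ) = p x * μf x - p x * μ := fun x _ => by ring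
    rw [Finset.sum_congr rfl this, Finset.sum_sub_distrib, hμsum, ← Finset.sum_mul, hpsum]
    ring
  have hvb : ∀ x ∈ S.erase w₀, p x ≠ 0 → |μf x - μ| ≤ κ := by
    intro x hx hpx
    have hne : (Fib x).Nonempty := by
      rw [Finset.nonempty_iff_ne_empty]
      intro h
      apply hpx
      simp only [hp, hm, h]
      simp
    have h1 : μf x - μ = ∑ y ∈ S.erase w₀, p y * (μf x - μf y) := by
      have : ∀ y ∈ S.erase w₀, p y * (μf x - μf y) = p y * μf x - p y * μf y :=
        fun y _ => by ring
      rw [Finset.sum_congr rfl this, Finset.sum_sub_distrib, ← Finset.sum_mul, hpsum, hμsum]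
      ring
    rw [h1]
    calc |∑ y ∈ S.erase w₀, p y * (μf x - μf y)|
        ≤ ∑ y ∈ S.erase w₀, |p y * (μf x - μf y)| := Finset.abs_sum_le_sum_abs _ _
      _ ≤ ∑ y ∈ S.erase w₀, p y * κ := by
          refine Finset.sum_le_sum fun y hy => ?_
          rw [abs_mul, abs_of_nonneg (hpnn y hy)]
          by_cases hpy : p y = 0
          · rw [hpy]; simp
          · exact mul_le_mul_of_nonneg_left (hD x hx y hy hne) (hpnn y hy)
      _ = κ := by rw [← Finset.sum_mul, hpsum, one_mul]
  -- (H) Hoeffding step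
  have hH : ∑ x ∈ S.erase w₀, p x * Real.exp (u * (μf x - μ)) ≤
      Real.exp (u ^ 2 * κ ^ 2 / 2) :=
    hoeffAux (S.erase w₀) p (fun x => μf x - μ) u κ hκ hpnn hpsum hvb hmean0
  -- final chain
  have hC : ∀ x ∈ S.erase w₀,
      ∑ f ∈ Fib x, Real.exp (u * (G f - μ)) =
        Real.exp (u * (μf x - μ)) * ∑ f ∈ Fib x, Real.exp (u * (G f - μf x)) := by
    intro x hx
    rw [Finset.mul_sum]
    refine Finset.sum_congr rfl fun f hf => ?_
    rw [← Real.exp_add]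
    congr 1
    ring
  set C2 : ℝ := Real.exp (u ^ 2 * ((S.card : ℝ) - 2) * κ ^ 2 / 4) with hC2
  calc ∑ f ∈ MMAux S, Real.exp (u * (G f - μ))
      = ∑ x ∈ S.erase w₀, ∑ f ∈ Fib x, Real.exp (u * (G f - μ)) :=
        (hA (fun f => Real.exp (u * (G f - μ)))).symm
    _ = ∑ x ∈ S.erase w₀, Real.exp (u * (μf x - μ)) *
          ∑ f ∈ Fib x, Real.exp (u * (G f - μf x)) :=
        Finset.sum_congr rfl hC
    _ ≤ ∑ x ∈ S.erase w₀, Real.exp (u * (μf x - μ)) * (m x * C2) := by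
        refine Finset.sum_le_sum fun x hx => ?_
        exact mul_le_mul_of_nonneg_left (hB x hx) (Real.exp_nonneg _)
    _ = (n1 * C2) * ∑ x ∈ S.erase w₀, p x * Real.exp (u * (μf x - μ)) := by
        rw [Finset.mul_sum]
        refine Finset.sum_congr rfl fun x hx => ?_
        simp only [hp]
        field_simp
    _ ≤ (n1 * C2) * Real.exp (u ^ 2 * κ ^ 2 / 2) := by
        refine mul_le_mul_of_nonneg_left hH ?_
        exact mul_nonneg hn1pos.le (Real.exp_nonneg _)
    _ = n1 * Real.exp (u ^ 2 * (S.card : ℝ) * κ ^ 2 / 4) := by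
        rw [hC2, mul_assoc, ← Real.exp_add]
        congr 2
        ring

end key3

/-- Perfect matchings of `W`, encoded as fixed-point-free involutions. -/
abbrev PerfMatching (W : Type*) : Type _ :=
  {σ : Equiv.Perm W // (∀ x, σ (σ x) = x) ∧ ∀ x, σ x ≠ x}

section bridge
variable {W : Type*} [Fintype W] [DecidableEq W]

noncomputable def toPMAux (f : W → W) (h : IsMatchAux (Finset.univ : Finset W) f) :
    PerfMatching W :=
  ⟨⟨f, f, fun x => h.1 x, fun x => h.1 x⟩, fun x => h.1 x,
    fun x => (h.2.1 x (Finset.mem_univ x)).1⟩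

noncomputable def pmEquiv (W : Type*) [Fintype W] [DecidableEq W] :
    PerfMatching W ≃ {f : W → W // f ∈ MMAux (Finset.univ : Finset W)} where
  toFun σ := ⟨⇑σ.1, mem_MMAux.2 ⟨σ.2.1, fun x _ => ⟨σ.2.2 x, Finset.mem_univ _⟩,
    fun x hx => absurd (Finset.mem_univ x) hx⟩⟩
  invFun g := toPMAux g.1 (mem_MMAux.1 g.2)
  left_inv σ := Subtype.ext (Equiv.ext fun z => rfl)
  right_inv g := Subtype.ext rfl

end bridge

/-- Let `W` be a finite set of even cardinality `N`, `Σ` the set of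
perfect matchings of `W`, and `σ` uniform on `Σ`.  If `F : Σ → ℝ` changes by at most
`κ` between matchings that coincide outside a set `J ⊆ W` with `|J| ≤ 4`, then for
`t > 0`, `P(F(σ) − E F(σ) ≥ t) ≤ exp(−t²/(N κ²))`. -/
theorem stmt_12 (W : Type*) [Finite W] (N : ℕ) (hW : Nat.card W = N)
    (hNeven : Even N) (κ : ℝ) (hκ : 0 < κ)
    (F : PerfMatching W → ℝ)
    (hF : ∀ m m' : PerfMatching W,
      (∃ J : Finset W, J.card ≤ 4 ∧ ∀ x ∉ J, m.1 x = m'.1 x) → |F m - F m'| ≤ κ)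
    (t : ℝ) (ht : 0 < t) :
    (Nat.card {σ : PerfMatching W //
        t ≤ F σ - (∑' σ' : PerfMatching W, F σ') / (Nat.card (PerfMatching W) : ℝ)} : ℝ) /
      (Nat.card (PerfMatching W) : ℝ) ≤
    Real.exp (-(t ^ 2) / (N * κ ^ 2)) := by
  letI : Fintype W := Fintype.ofFinite W
  letI : DecidableEq W := Classical.decEq W
  letI : Fintype (PerfMatching W) := Fintype.ofFinite _
  set M : Finset (W → W) := MMAux (Finset.univ : Finset W) with hM
  set F' : (W → W) → ℝ := fun f =>
    if h : f ∈ MMAux (Finset.univ : Finset W) then F (toPMAux f (mem_MMAux.1 h)) else 0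
    with hF'def
  have hF'eq : ∀ σ : PerfMatching W, F' (⇑σ.1) = F σ := by
    intro σ
    have hmem : ⇑σ.1 ∈ MMAux (Finset.univ : Finset W) := (pmEquiv W σ).2
    simp only [hF'def]
    rw [dif_pos hmem]
    exact congrArg F (Subtype.ext (Equiv.ext fun z => rfl))
  have hcard : Nat.card (PerfMatching W) = M.card := by
    rw [Nat.card_congr (pmEquiv W), Nat.card_eq_fintype_card, Fintype.card_coe]
  have htsum : (∑' σ' : PerfMatching W, F σ') = ∑ f ∈ M, F' f := by
    rw [tsum_fintype]
    calc ∑ σ : PerfMatching W, F σ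
        = ∑ g : {f // f ∈ MMAux (Finset.univ : Finset W)}, F' g.1 :=
          Fintype.sum_equiv (pmEquiv W) _ _ (fun σ => (hF'eq σ).symm)
      _ = ∑ f ∈ M, F' f := Finset.sum_coe_sort M F'
  rw [htsum, hcard]
  set μ : ℝ := (∑ f ∈ M, F' f) / (M.card : ℝ) with hμ
  have hcount : Nat.card {σ : PerfMatching W // t ≤ F σ - μ} =
      (M.filter (fun f => t ≤ F' f - μ)).card := by
    have e2 : {σ : PerfMatching W // t ≤ F σ - μ} ≃
        {f // f ∈ M.filter (fun f => t ≤ F' f - μ)} :=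
      { toFun := fun σ => ⟨⇑σ.1.1, Finset.mem_filter.2 ⟨(pmEquiv W σ.1).2, by
          rw [hF'eq σ.1]; exact σ.2⟩⟩
        invFun := fun g => ⟨toPMAux g.1 (mem_MMAux.1 (Finset.mem_filter.1 g.2).1), by
          have h := (Finset.mem_filter.1 g.2).2
          simp only [hF'def] at h
          rwa [dif_pos (Finset.mem_filter.1 g.2).1] at h⟩
        left_inv := fun σ => Subtype.ext (Subtype.ext (Equiv.ext fun z => rfl))
        right_inv := fun g => Subtype.ext rfl }
    rw [Nat.card_congr e2, Nat.card_eq_fintype_card, Fintype.card_coe]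
  rw [hcount]
  -- Lipschitz property of F' on M
  have hlip : ∀ f ∈ MMAux (Finset.univ : Finset W), ∀ g ∈ MMAux (Finset.univ : Finset W),
      (∃ J : Finset W, J.card ≤ 4 ∧ ∀ z ∉ J, f z = g z) → |F' f - F' g| ≤ κ := by
    intro f hf g hg hJ
    simp only [hF'def]
    rw [dif_pos hf, dif_pos hg]
    exact hF _ _ hJ
  by_cases hN : N = 0
  · -- degenerate case: `W` is empty, there is exactly one matching
    have hWem : IsEmpty W := by
      have h0 : Nat.card W = 0 := by rw [hW, hN]
      rcases Nat.card_eq_zero.1 h0 with h | h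
      · exact h
      · exact absurd ‹Finite W› (by rw [not_finite_iff_infinite]; exact h)
    have hMne : (fun z : W => z) ∈ M :=
      mem_MMAux.2 ⟨fun z => rfl, fun z hz => isEmptyElim z, fun z _ => rfl⟩
    have hMpos : 0 < (M.card : ℝ) := by exact_mod_cast Finset.card_pos.2 ⟨_, hMne⟩
    have hRHS : Real.exp (-(t ^ 2) / (↑N * κ ^ 2)) = 1 := by
      rw [hN]; norm_num
    rw [hRHS, div_le_one hMpos]
    exact_mod_cast Finset.card_filter_le M _
  · have hNpos : 0 < (N : ℝ) := by exact_mod_cast Nat.pos_of_ne_zero hN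
    have hNκ : (0 : ℝ) < ↑N * κ ^ 2 := by positivity
    set u : ℝ := 2 * t / (↑N * κ ^ 2) with hu
    have hupos : 0 < u := by rw [hu]; positivity
    have hunivcard : (Finset.univ : Finset W).card = N := by
      rw [Finset.card_univ, ← Nat.card_eq_fintype_card, hW]
    have hkey := keyAux κ u hκ (Finset.univ : Finset W).card (Finset.univ : Finset W)
      rfl F' hlip
    rw [hunivcard, ← hM, ← hμ] at hkey
    by_cases hMem : M = ∅
    · rw [hMem]
      simp [Real.exp_nonneg]
    have hMpos : 0 < (M.card : ℝ) := by
      exact_mod_cast Finset.card_pos.2 (Finset.nonempty_iff_ne_empty.2 hMem)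
    set A : ℝ := ((M.filter (fun f => t ≤ F' f - μ)).card : ℝ) with hA
    have step1 : A * Real.exp (u * t) ≤
        ∑ f ∈ M.filter (fun f => t ≤ F' f - μ), Real.exp (u * (F' f - μ)) := by
      have h0 : A * Real.exp (u * t) =
          ∑ f ∈ M.filter (fun f => t ≤ F' f - μ), Real.exp (u * t) := by
        rw [Finset.sum_const, nsmul_eq_mul, hA]
      rw [h0]
      refine Finset.sum_le_sum fun f hf => ?_
      exact Real.exp_le_exp.2 (mul_le_mul_of_nonneg_left (Finset.mem_filter.1 hf).2 hupos.le)
    have step2 : ∑ f ∈ M.filter (fun f => t ≤ F' f - μ), Real.exp (u * (F' f - μ)) ≤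
        ∑ f ∈ M, Real.exp (u * (F' f - μ)) :=
      Finset.sum_le_sum_of_subset_of_nonneg (Finset.filter_subset _ _)
        (fun f _ _ => (Real.exp_pos _).le)
    have h3 : A ≤ (M.card : ℝ) * Real.exp (u ^ 2 * ↑N * κ ^ 2 / 4 - u * t) := by
      rw [Real.exp_sub, ← mul_div_assoc, le_div_iff₀ (Real.exp_pos _)]
      exact (step1.trans step2).trans hkey
    have hexp : u ^ 2 * ↑N * κ ^ 2 / 4 - u * t = -(t ^ 2) / (↑N * κ ^ 2) := by
      rw [hu]
      field_simp
      ring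
    rw [div_le_iff₀ hMpos]
    refine h3.trans (le_of_eq ?_)
    rw [hexp, mul_comm]
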